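/- Let G be an abelian group generated by a finite set X. Then G has only finitely many dead ends with respect to the word metric d_X. -/

import Mathlib

/-- The word length of `g` with respect to the generating set `X`
(words may use generators and their inverses). -/
noncomputable def wordLength {G : Type*} [Group G] (X : Set G) (g : G) : ℕ :=
  sInf {n | ∃ l : List G, l.length = n ∧ (∀ x ∈ l, x ∈ X ∨ x⁻¹ ∈ X) ∧ l.prod = g}

/-- `g` is a dead end with respect to `X` if no generator (or inverse of a
generator) moves `g` further from the identity:
the ball of radius `1` around `g` is contained in the ball of radius
`wordLength X g` around `1`. -/
def IsDeadEnd {G : Type*} [Group G] (X : Set G) (g : G) : Prop :=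
  ∀ x : G, (x ∈ X ∨ x⁻¹ ∈ X) → wordLength X (g * x) ≤ wordLength X g

lemma wordLength_le_length {G : Type*} [Group G] {X : Set G} {l : List G}
    (hl : ∀ x ∈ l, x ∈ X ∨ x⁻¹ ∈ X) : wordLength X l.prod ≤ l.length :=
  Nat.sInf_le ⟨l, rfl, hl, rfl⟩

lemma exists_min_list {G : Type*} [Group G] {X : Set G} (hX : Subgroup.closure X = ⊤) (g : G) :
    ∃ l : List G, (∀ x ∈ l, x ∈ X ∨ x⁻¹ ∈ X) ∧ l.prod = g ∧ l.length = wordLength X g := by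
  have hg : g ∈ Subgroup.closure X := hX ▸ Subgroup.mem_top g
  rw [← Subgroup.mem_toSubmonoid, Subgroup.closure_toSubmonoid] at hg
  obtain ⟨l, h1, h2⟩ := Submonoid.exists_list_of_mem_closure hg
  have hcond : ∀ x ∈ l, x ∈ X ∨ x⁻¹ ∈ X := by
    intro x hx
    rcases h1 x hx with h | h
    · exact Or.inl h
    · exact Or.inr (Set.mem_inv.mp h)
  have hne : {n | ∃ l : List G, l.length = n ∧ (∀ x ∈ l, x ∈ X ∨ x⁻¹ ∈ X) ∧ l.prod = g}.Nonempty :=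
    ⟨l.length, l, rfl, hcond, h2⟩
  obtain ⟨l', hlen, hc, hp⟩ := Nat.sInf_mem hne
  exact ⟨l', hc, hp, hlen⟩

/-- An abelian group generated by a finite set `X` has only finitely many dead
ends with respect to the word metric `d_X`. -/
theorem finitely_many_dead_ends_of_abelian {G : Type*} [CommGroup G] (X : Finset G)
    (hX : Subgroup.closure (X : Set G) = ⊤) :
    {g : G | IsDeadEnd (X : Set G) g}.Finite := by
  by_contra hfin
  classical
  set Y : Finset G := X ∪ X.image (·⁻¹) with hY
  choose L hL1 hL2 hL3 using fun g : G => exists_min_list hX g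
  -- letters of minimal words lie in Y
  have hmemY : ∀ g : G, ∀ x ∈ L g, x ∈ Y := by
    intro g x hx
    rcases hL1 g x hx with h | h
    · exact Finset.mem_union_left _ h
    · exact Finset.mem_union_right _ (Finset.mem_image.mpr ⟨x⁻¹, h, inv_inv x⟩)
  -- the multiset of a minimal word
  set m : G → Multiset G := fun g => (L g : Multiset G) with hm
  have hprod : ∀ g : G, (m g).prod = g := fun g => (Multiset.prod_coe (L g)).trans (hL2 g)
  have hcard : ∀ g : G, Multiset.card (m g) = wordLength (X : Set G) g := fun g =>
    (Multiset.coe_card (L g)).trans (hL3 g)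
  -- use Dickson's lemma
  have hinf : {g : G | IsDeadEnd (X : Set G) g}.Infinite := hfin
  obtain ⟨f, hfinj⟩ := hinf.natEmbedding
  have hpwo : (Set.univ : Set (↥Y → ℕ)).IsPWO := Set.isPWO_of_wellQuasiOrderedLE Set.univ
  obtain ⟨i, j, hij, hle⟩ := hpwo.exists_lt (f := fun n (y : ↥Y) => (m (f n : G)).count ↑y)
    (fun n => Set.mem_univ _)
  set g : G := (f i : G)
  set g' : G := (f j : G)
  have hgg' : g ≠ g' := fun h => absurd (hfinj (Subtype.ext h)) (Nat.ne_of_lt hij)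
  have hde : IsDeadEnd (X : Set G) g := (f i).2
  have hmle : m g ≤ m g' := by
    rw [Multiset.le_iff_count]
    intro a
    by_cases ha : a ∈ Y
    · exact hle ⟨a, ha⟩
    · have : a ∉ m g := fun hmem => ha (hmemY _ a (by exact_mod_cast hmem))
      simp [Multiset.count_eq_zero.mpr this]
  set d : Multiset G := m g' - m g with hd
  have hadd : m g + d = m g' := add_tsub_cancel_of_le hmle
  have hdne : d ≠ 0 := by
    intro h
    apply hgg'
    rw [← hprod g, ← hprod g', ← hadd, h, add_zero]
  obtain ⟨y, hy⟩ := Multiset.exists_mem_of_ne_zero hdne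
  have hyg' : y ∈ m g' := Multiset.mem_of_le (tsub_le_self) hy
  have hycond : y ∈ (X : Set G) ∨ y⁻¹ ∈ (X : Set G) := hL1 g' y (by exact_mod_cast hyg')
  -- decompose g'
  have hsplit : m g' = m g + (y ::ₘ d.erase y) := by rw [Multiset.cons_erase hy, hadd]
  have hkey : g' = (g * y) * (d.erase y).prod := by
    rw [← hprod g', hsplit, Multiset.prod_add, Multiset.prod_cons, hprod, mul_assoc]
  -- bound the word length of g'
  have h1 : wordLength (X : Set G) (g * y) ≤ wordLength (X : Set G) g := hde y hycond
  have hlist : ∀ x ∈ L (g * y) ++ (d.erase y).toList, x ∈ (X : Set G) ∨ x⁻¹ ∈ (X : Set G) := by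
    intro x hx
    rcases List.mem_append.mp hx with h | h
    · exact hL1 _ x h
    · have : x ∈ m g' := Multiset.mem_of_le tsub_le_self
        (Multiset.mem_of_le (Multiset.erase_le y d) (Multiset.mem_toList.mp h))
      exact hL1 g' x (by exact_mod_cast this)
  have h2 : wordLength (X : Set G) g' ≤ wordLength (X : Set G) (g * y) + Multiset.card (d.erase y) := by
    have hp : (L (g * y) ++ (d.erase y).toList).prod = g' := by
      rw [List.prod_append, hL2, Multiset.prod_toList, ← hkey]
    calc wordLength (X : Set G) g' = wordLength (X : Set G) (L (g * y) ++ (d.erase y).toList).prod := by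
          rw [hp]
      _ ≤ (L (g * y) ++ (d.erase y).toList).length := wordLength_le_length hlist
      _ = wordLength (X : Set G) (g * y) + Multiset.card (d.erase y) := by
          rw [List.length_append, hL3, Multiset.length_toList]
  -- counting
  have hcards : Multiset.card (m g') = Multiset.card (m g) + (Multiset.card (d.erase y) + 1) := by
    rw [hsplit, Multiset.card_add, Multiset.card_cons]
  have h3 := h2.trans (Nat.add_le_add_right h1 _)
  have e1 := hcard g
  have e2 := hcard g'
  omega
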